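/- arXiv:2211.07411 — 2 statements merged into one kernel-verified Lean document; each statement's English description precedes it below -/
import Mathlib

section
/- Let F ∈ ℝ^{n×n} with ρ(F) ≥ 1 having a real eigenvector w̄, ‖w̄‖ = W, for an eigenvalue of modulus ρ(F). Suppose stage costs satisfy c_t(x,u) ≥ M·‖x‖² with M > 0. Then for the trajectory x₀ = 0, x_{t+1} = Fx_t + w̄ and any input sequence u_t, it is impossible for there to exist constants C̄₀, C̄_w with ∑_{t=0}^T c_t(x_t,u_t) ≤ C̄₀ + C̄_w·T for all T > 0. -/
open Filter Finset Matrix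
open scoped Matrix.Norms.L2Operator

/-- The spectral radius of a real square matrix: the maximum modulus of its complex
eigenvalues, i.e. the spectral radius of its complexification. -/
noncomputable def specRad {n : ℕ} (F : Matrix (Fin n) (Fin n) ℝ) : ℝ :=
  (spectralRadius ℂ (F.map Complex.ofReal)).toReal

/-- If `ρ(F) ≥ 1` with a real eigenvector `w̄` (of norm `W`) for an eigenvalue equal to the
spectral radius, and stage costs satisfy `c_t(x,u) ≥ M‖x‖²` with `M > 0`, then for the
trajectory `x₀ = 0`, `x_{t+1} = Fx_t + w̄` and any input sequence `u_t`, no constants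
`C̄₀, C̄_w` can satisfy `∑_{t=0}^T c_t(x_t,u_t) ≤ C̄₀ + C̄_w·T` for all `T > 0`. -/
theorem no_linear_cost_bound_of_unstable {n m : ℕ}
    (F : Matrix (Fin n) (Fin n) ℝ) (hρ : 1 ≤ specRad F)
    (wbar : EuclideanSpace ℝ (Fin n)) (hwbar : wbar ≠ 0) (W : ℝ) (hWnorm : ‖wbar‖ = W)
    (heig : Matrix.toEuclideanLin F wbar = specRad F • wbar)
    (c : ℕ → EuclideanSpace ℝ (Fin n) → EuclideanSpace ℝ (Fin m) → ℝ)
    (M : ℝ) (hM : 0 < M) (hclb : ∀ t x u, M * ‖x‖ ^ 2 ≤ c t x u)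
    (x : ℕ → EuclideanSpace ℝ (Fin n)) (hx0 : x 0 = 0)
    (hxs : ∀ t, x (t + 1) = Matrix.toEuclideanLin F (x t) + wbar) :
    ∀ u : ℕ → EuclideanSpace ℝ (Fin m),
      ¬∃ C₀ Cw : ℝ, ∀ T : ℕ, 0 < T →
          ∑ t ∈ Finset.range (T + 1), c t (x t) (u t) ≤ C₀ + Cw * T := by
  intro u
  rintro ⟨C₀, Cw, hbd⟩
  set ρ := specRad F with hρdef
  have hρ0 : (0:ℝ) ≤ ρ := le_trans zero_le_one hρ
  have hW : 0 < W := hWnorm ▸ norm_pos_iff.mpr hwbar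
  -- closed form for the trajectory
  have hxt : ∀ t, x t = (∑ k ∈ Finset.range t, ρ ^ k) • wbar := by
    intro t
    induction t with
    | zero => simpa using hx0
    | succ t ih =>
      rw [hxs t, ih, _root_.map_smul, heig, smul_smul, geom_sum_succ, add_smul,
        one_smul, mul_comm]
  -- sum lower bound
  have hsum : ∀ t : ℕ, (t : ℝ) ≤ ∑ k ∈ Finset.range t, ρ ^ k := by
    intro t
    calc (t : ℝ) = ∑ k ∈ Finset.range t, (1:ℝ) := by simp
    _ ≤ ∑ k ∈ Finset.range t, ρ ^ k :=
        Finset.sum_le_sum fun k _ => one_le_pow₀ hρ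
  have hnorm : ∀ t : ℕ, (t : ℝ) * W ≤ ‖x t‖ := by
    intro t
    rw [hxt t, norm_smul, hWnorm, Real.norm_eq_abs,
      abs_of_nonneg (le_trans (Nat.cast_nonneg t) (hsum t))]
    exact mul_le_mul_of_nonneg_right (hsum t) hW.le
  -- cost lower bound at each time
  have hc : ∀ t : ℕ, M * ((t : ℝ) * W) ^ 2 ≤ c t (x t) (u t) := by
    intro t
    refine le_trans ?_ (hclb t (x t) (u t))
    have := hnorm t
    have h0 : (0:ℝ) ≤ (t:ℝ) * W := mul_nonneg (Nat.cast_nonneg t) hW.le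
    nlinarith [norm_nonneg (x t), mul_self_le_mul_self h0 this, sq_nonneg ((t:ℝ)*W)]
  -- pick a large T
  obtain ⟨T, hT⟩ := exists_nat_gt ((|C₀| + |Cw| + 1) / (M * W ^ 2))
  have hT1 : 1 ≤ T := by
    by_contra h
    push_neg at h
    interval_cases T
    · simp at hT
      nlinarith [abs_nonneg C₀, abs_nonneg Cw, div_nonneg (by nlinarith [abs_nonneg C₀, abs_nonneg Cw] : (0:ℝ) ≤ |C₀| + |Cw| + 1) (by nlinarith : (0:ℝ) ≤ M * W ^ 2)]
  have hTpos : 0 < T := hT1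
  have hbound := hbd T hTpos
  -- lower bound the sum by the last term
  have hlast : M * ((T : ℝ) * W) ^ 2 ≤ ∑ t ∈ Finset.range (T + 1), c t (x t) (u t) := by
    calc M * ((T : ℝ) * W) ^ 2 ≤ c T (x T) (u T) := hc T
    _ ≤ ∑ t ∈ Finset.range (T + 1), c t (x t) (u t) := by
        refine Finset.single_le_sum (f := fun t => c t (x t) (u t)) ?_ (by simp)
        intro i _
        exact le_trans (by positivity) (hclb i (x i) (u i))
  have hMW : 0 < M * W ^ 2 := by positivity
  have hTgt : (|C₀| + |Cw| + 1) < M * W ^ 2 * T := by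
    rw [div_lt_iff₀ hMW] at hT
    linarith [hT]
  have hT1' : (1:ℝ) ≤ (T:ℝ) := by exact_mod_cast hT1
  have : M * ((T : ℝ) * W) ^ 2 > C₀ + Cw * T := by
    have h1 : M * ((T:ℝ) * W) ^ 2 = (M * W ^ 2 * T) * T := by ring
    have h2 : (M * W ^ 2 * T) * T > (|C₀| + |Cw| + 1) * T := by
      apply mul_lt_mul_of_pos_right hTgt
      exact_mod_cast hTpos
    have h3 : (|C₀| + |Cw| + 1) * T ≥ C₀ + Cw * T := by
      have hC0 : C₀ ≤ |C₀| * T := le_trans (le_abs_self C₀)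
        (le_mul_of_one_le_right (abs_nonneg _) hT1')
      have hCw : Cw * T ≤ |Cw| * T := by
        apply mul_le_mul_of_nonneg_right (le_abs_self Cw)
        positivity
      nlinarith
    linarith
  linarith
end

section
/- Suppose stage costs satisfy c_t(x,u) ≥ M‖x‖² with M > 0, each F_t is invertible, and 0 < liminf_{T→∞}‖Φ(T,0)‖ ≤ limsup_{T→∞}‖Φ(T,0)‖ < ∞. Then there exist a nonzero vector w̄₀ and C > 0 with ‖C·Φ(k,0)w̄₀‖ ≤ W for all k, such that the trajectory x₀ = 0, w_{k-1} = C·Φ(k,0)w̄₀ satisfies ∑_{t=0}^T c_t(x_t,u_t) ≥ M·C²·∑_{t=1}^T t²·‖Φ(t,0)w̄₀‖², and liminf_{T→∞}(1/T)∑_{t=0}^T c_t(x_t,u_t) = ∞; hence no linear-in-T bound on the cumulative cost holds. -/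
open Filter Finset

/-- `Phi F k t` is the state transition matrix `Φ(t, k) = F_{t-1} ⋯ F_k` (with `Φ(k, k) = 1`)
of the linear time-varying system `x_{t+1} = F_t x_t` on `ℝ^n` (Euclidean norm). -/
noncomputable def Phi {n : ℕ}
    (F : ℕ → (EuclideanSpace ℝ (Fin n) →L[ℝ] EuclideanSpace ℝ (Fin n)))
    (k : ℕ) : ℕ → (EuclideanSpace ℝ (Fin n) →L[ℝ] EuclideanSpace ℝ (Fin n))
  | 0 => 1
  | t + 1 => if t + 1 ≤ k then 1 else F t * Phi F k t


open MeasureTheory RealInnerProductSpace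


lemma coord_le_norm {n : ℕ} (w : EuclideanSpace ℝ (Fin n)) (i : Fin n) : |w i| ≤ ‖w‖ := by
  rw [EuclideanSpace.norm_eq]
  calc |w i| = √(‖w i‖^2) := by rw [Real.sqrt_sq_eq_abs, Real.norm_eq_abs, abs_abs]
  _ ≤ _ := by
      apply Real.sqrt_le_sqrt
      exact Finset.single_le_sum (f := fun j => ‖w j‖^2) (fun j _ => sq_nonneg _) (mem_univ i)

set_option maxHeartbeats 2000000 in
lemma slab_measure {n : ℕ} (hn : 0 < n) (u : EuclideanSpace ℝ (Fin n)) (hu : ‖u‖ = 1) (δ : ℝ) :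
    volume {v : EuclideanSpace ℝ (Fin n) | |⟪u, v⟫| ≤ δ ∧ ‖v‖ ≤ 2}
      ≤ ENNReal.ofReal (2*δ) * (ENNReal.ofReal 4)^(n-1) := by
  classical
  set i₀ : Fin n := ⟨0, hn⟩
  have hcard : Module.finrank ℝ (EuclideanSpace ℝ (Fin n)) = Fintype.card (Fin n) := by
    simp [finrank_euclideanSpace]
  have horth : Orthonormal ℝ (({i₀} : Set (Fin n)).restrict (fun _ => u)) := by
    constructor
    · intro j; simp [Set.restrict, real_inner_self_eq_norm_sq, hu]
    · intro j k hjk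
      exact absurd (Subsingleton.elim j k) hjk
  obtain ⟨b, hb⟩ := horth.exists_orthonormalBasis_extension_of_card_eq hcard
  have hbu : b i₀ = u := hb i₀ rfl
  have hrepr : MeasurePreserving (⇑b.repr) volume volume := b.measurePreserving_repr
  set T : Set (EuclideanSpace ℝ (Fin n)) := {w | |w i₀| ≤ δ ∧ ‖w‖ ≤ 2} with hT
  have hTmeas : MeasurableSet T := by
    have h1 : IsClosed {w : EuclideanSpace ℝ (Fin n) | |w i₀| ≤ δ} :=
      isClosed_le (Continuous.abs (EuclideanSpace.proj i₀).continuous) continuous_const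
    have h2 : IsClosed {w : EuclideanSpace ℝ (Fin n) | ‖w‖ ≤ 2} :=
      isClosed_le continuous_norm continuous_const
    exact (h1.inter h2).measurableSet
  have hpre : {v : EuclideanSpace ℝ (Fin n) | |⟪u, v⟫| ≤ δ ∧ ‖v‖ ≤ 2} = ⇑b.repr ⁻¹' T := by
    ext v
    simp only [Set.mem_setOf_eq, Set.mem_preimage, hT, b.repr_apply_apply, hbu,
      LinearIsometryEquiv.norm_map]
  rw [hpre, hrepr.measure_preimage hTmeas.nullMeasurableSet]
  have hbox : T ⊆ (MeasurableEquiv.toLp 2 (Fin n → ℝ)).symm ⁻¹'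
      (Set.pi Set.univ fun i => Set.Icc (if i = i₀ then -δ else -2) (if i = i₀ then δ else 2)) := by
    intro w hw
    intro i _
    by_cases hi : i = i₀
    · subst hi
      simp only [if_pos rfl]
      exact abs_le.mp hw.1
    · simp only [if_neg hi]
      exact abs_le.mp (le_trans (coord_le_norm w i) hw.2)
  calc volume T ≤ _ := measure_mono hbox
  _ = volume (Set.pi Set.univ fun i => Set.Icc (if i = i₀ then -δ else -2) (if i = i₀ then δ else 2)) :=
      (EuclideanSpace.volume_preserving_symm_measurableEquiv_toLp (Fin n)).measure_preimage
        (MeasurableSet.univ_pi fun i => measurableSet_Icc).nullMeasurableSet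
  _ ≤ ENNReal.ofReal (2*δ) * (ENNReal.ofReal 4)^(n-1) := by
      rw [volume_pi_pi]
      have h4 : ∀ i : Fin n, volume (Set.Icc (if i = i₀ then -δ else (-2:ℝ)) (if i = i₀ then δ else 2))
          = if i = i₀ then ENNReal.ofReal (2*δ) else ENNReal.ofReal 4 := by
        intro i; rw [Real.volume_Icc]; split <;> ring_nf
      simp only [h4]
      rw [← Finset.mul_prod_erase Finset.univ _ (mem_univ i₀), if_pos rfl]
      have h5 : ∀ i ∈ Finset.univ.erase i₀,
          (if i = i₀ then ENNReal.ofReal (2*δ) else ENNReal.ofReal 4) = ENNReal.ofReal 4 :=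
        fun i hi => if_neg (Finset.ne_of_mem_erase hi)
      rw [Finset.prod_congr rfl h5, Finset.prod_const, Finset.card_erase_of_mem (mem_univ i₀),
        Finset.card_univ, Fintype.card_fin]

lemma small_image_measure {n : ℕ} (hn : 0 < n)
    (A : EuclideanSpace ℝ (Fin n) →L[ℝ] EuclideanSpace ℝ (Fin n))
    {cc B : ℝ} (hc : 0 < cc) (hcA : cc ≤ ‖A‖) (hAB : ‖A‖ ≤ B) (ε : ℝ) (hε : 0 ≤ ε) :
    volume ({v : EuclideanSpace ℝ (Fin n) | ‖A v‖ ≤ ε} ∩ Metric.closedBall 0 2)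
      ≤ ENNReal.ofReal (2*((4/cc^2)*(B*ε))) * (ENNReal.ofReal 4)^(n-1) := by
  obtain ⟨x, hx1, hx2⟩ := A.exists_lt_apply_of_lt_opNorm (r := cc/2) (lt_of_lt_of_le (by linarith) hcA)
  have hx1' : ‖x‖ ≤ 1 := le_of_lt hx1
  set w : EuclideanSpace ℝ (Fin n) := (ContinuousLinearMap.adjoint A) (A x) with hw
  have hwx : ⟪w, x⟫ = ‖A x‖^2 := by
    rw [hw, ContinuousLinearMap.adjoint_inner_left, real_inner_self_eq_norm_sq]
  have hwnorm : cc^2/4 < ‖w‖ := by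
    have h1 : ⟪w, x⟫ ≤ ‖w‖ * ‖x‖ := real_inner_le_norm w x
    have h2 : ‖w‖ * ‖x‖ ≤ ‖w‖ := by
      nlinarith [norm_nonneg w]
    nlinarith [hwx, hx2, norm_nonneg (A x)]
  have hwpos : 0 < ‖w‖ := lt_trans (by positivity) hwnorm
  set u : EuclideanSpace ℝ (Fin n) := ‖w‖⁻¹ • w with hu
  have hunorm : ‖u‖ = 1 := by
    rw [hu, norm_smul, norm_inv, norm_norm, inv_mul_cancel₀ (ne_of_gt hwpos)]
  have hsub : {v : EuclideanSpace ℝ (Fin n) | ‖A v‖ ≤ ε} ∩ Metric.closedBall 0 2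
      ⊆ {v | |⟪u, v⟫| ≤ (4/cc^2)*(B*ε) ∧ ‖v‖ ≤ 2} := by
    rintro v ⟨hv1, hv2⟩
    refine ⟨?_, by simpa [Metric.mem_closedBall, dist_zero_right] using hv2⟩
    have hinner : ⟪w, v⟫ = ⟪A x, A v⟫ := by
      rw [hw, ContinuousLinearMap.adjoint_inner_left]
    have hAx : ‖A x‖ ≤ B := le_trans (le_trans (A.le_opNorm x) (by nlinarith [A.opNorm_nonneg])) (le_refl B)
    have habs : |⟪w, v⟫| ≤ B * ε := by
      rw [hinner]
      calc |⟪A x, A v⟫| ≤ ‖A x‖ * ‖A v‖ := abs_real_inner_le_norm _ _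
      _ ≤ B * ε := by
          apply mul_le_mul hAx hv1 (norm_nonneg _)
          linarith [A.opNorm_nonneg, hAB]
    rw [hu, real_inner_smul_left, abs_mul, abs_inv, abs_norm]
    calc ‖w‖⁻¹ * |⟪w, v⟫| ≤ ‖w‖⁻¹ * (B * ε) := by
          apply mul_le_mul_of_nonneg_left habs (by positivity)
    _ ≤ (4/cc^2) * (B * ε) := by
          apply mul_le_mul_of_nonneg_right _ (mul_nonneg (le_trans hc.le (hcA.trans hAB)) hε)
          have h7 : ‖w‖⁻¹ ≤ (cc^2/4)⁻¹ := by
            apply inv_anti₀ (by positivity) (le_of_lt hwnorm)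
          calc ‖w‖⁻¹ ≤ (cc^2/4)⁻¹ := h7
          _ = 4/cc^2 := by rw [inv_div]
  exact le_trans (measure_mono hsub) (slab_measure hn u hunorm _)

lemma exists_good_vector {n : ℕ} (hn : 0 < n)
    (Φ : ℕ → (EuclideanSpace ℝ (Fin n) →L[ℝ] EuclideanSpace ℝ (Fin n)))
    {cc B : ℝ} (hc : 0 < cc) {N : ℕ}
    (hbound : ∀ t, N ≤ t → cc ≤ ‖Φ t‖ ∧ ‖Φ t‖ ≤ B) :
    ∃ v : EuclideanSpace ℝ (Fin n),
      Tendsto (fun T : ℕ => (∑ t ∈ Icc 1 T, (t:ℝ)^2 * ‖Φ t v‖^2) / T) atTop atTop := by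
  classical
  have hcB : cc ≤ B := le_trans (hbound N le_rfl).1 (hbound N le_rfl).2
  have hB0 : 0 < B := lt_of_lt_of_le hc hcB
  set Bset : ℕ → ℕ → Set (EuclideanSpace ℝ (Fin n)) := fun K j =>
    {v | ‖Φ (4^j) v‖ ≤ 2 * Real.sqrt ((K:ℝ)+1) * (1/2)^j} ∩ Metric.closedBall 0 2 with hBset
  set q : ENNReal := ENNReal.ofReal (1/2) with hq
  set DK : ℕ → ENNReal := fun K =>
    ENNReal.ofReal (2*((4/cc^2)*(B*(2*Real.sqrt ((K:ℝ)+1))))) * (ENNReal.ofReal 4)^(n-1) with hDK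
  have hDKtop : ∀ K, DK K ≠ ⊤ := fun K =>
    ENNReal.mul_ne_top ENNReal.ofReal_ne_top (ENNReal.pow_ne_top ENNReal.ofReal_ne_top)
  have hmeas : ∀ K j, N ≤ 4^j → volume (Bset K j) ≤ DK K * q^j := by
    intro K j hNj
    have hsq : (0:ℝ) ≤ Real.sqrt ((K:ℝ)+1) := Real.sqrt_nonneg _
    have h1 := small_image_measure hn (Φ (4^j)) hc (hbound _ hNj).1 (hbound _ hNj).2
      (2 * Real.sqrt ((K:ℝ)+1) * (1/2)^j) (by positivity)
    refine le_trans h1 ?_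
    have he : 2*((4/cc^2)*(B*(2 * Real.sqrt ((K:ℝ)+1) * (1/2)^j)))
        = (2*((4/cc^2)*(B*(2*Real.sqrt ((K:ℝ)+1))))) * (1/2)^j := by ring
    rw [he, ENNReal.ofReal_mul (by positivity), ENNReal.ofReal_pow (by norm_num)]
    rw [hDK, hq]
    ring_nf
    exact le_rfl
  -- tail bound
  have hq1 : q < 1 := by rw [hq]; exact ENNReal.ofReal_lt_one.mpr (by norm_num)
  have hqtop : (1 - q)⁻¹ ≠ ⊤ := by
    simp only [ne_eq, ENNReal.inv_eq_top, tsub_eq_zero_iff_le]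
    exact fun h => absurd h (not_le.mpr hq1)
  set LimBad : ℕ → Set (EuclideanSpace ℝ (Fin n)) := fun K => ⋂ (J : ℕ), ⋃ (i : ℕ), Bset K (J + i)
    with hLimBad
  have hnull : ∀ K, volume (LimBad K) = 0 := by
    intro K
    have hb : ∀ J, N ≤ J → volume (LimBad K) ≤ (DK K * (1-q)⁻¹) * q^J := by
      intro J hNJ
      have hsub : LimBad K ⊆ ⋃ (i : ℕ), Bset K (J + i) := Set.iInter_subset _ J
      refine le_trans (le_trans (measure_mono hsub) (measure_iUnion_le _)) ?_
      have hterm : ∀ i : ℕ, volume (Bset K (J + i)) ≤ DK K * q^(J+i) := by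
        intro i
        apply hmeas
        calc N ≤ J := hNJ
        _ ≤ 4^J := le_of_lt (Nat.lt_pow_self (by norm_num))
        _ ≤ 4^(J+i) := Nat.pow_le_pow_right (by norm_num) (Nat.le_add_right _ _)
      refine le_trans (ENNReal.tsum_le_tsum hterm) ?_
      have : ∀ i : ℕ, DK K * q^(J+i) = (DK K * q^J) * q^i := by
        intro i; rw [pow_add]; ring
      rw [tsum_congr this, ENNReal.tsum_mul_left, ENNReal.tsum_geometric]
      ring_nf
      exact le_rfl
    have htend : Tendsto (fun J : ℕ => (DK K * (1-q)⁻¹) * q^J) atTop (nhds 0) := by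
      have h0 : Tendsto (fun J : ℕ => q^J) atTop (nhds 0) :=
        ENNReal.tendsto_pow_atTop_nhds_zero_of_lt_one hq1
      have := ENNReal.Tendsto.const_mul h0 (Or.inr (ENNReal.mul_ne_top (hDKtop K) hqtop))
      simpa using this
    have := ge_of_tendsto htend (eventually_atTop.mpr ⟨N, hb⟩)
    exact le_antisymm this zero_le
  have hUnull : volume (⋃ K : ℕ, LimBad K) = 0 := measure_iUnion_null hnull
  have hball : 0 < volume (Metric.closedBall (0 : EuclideanSpace ℝ (Fin n)) 2) :=
    lt_of_lt_of_le (Metric.measure_ball_pos volume 0 (by norm_num)) (measure_mono Metric.ball_subset_closedBall)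
  have hne : (Metric.closedBall (0 : EuclideanSpace ℝ (Fin n)) 2 \ ⋃ K : ℕ, LimBad K).Nonempty := by
    rw [Set.nonempty_iff_ne_empty]
    intro hemp
    have hsub : Metric.closedBall (0 : EuclideanSpace ℝ (Fin n)) 2 ⊆ ⋃ K : ℕ, LimBad K :=
      Set.diff_eq_empty.mp hemp
    exact absurd (le_trans (measure_mono hsub) (le_of_eq hUnull)) (not_le.mpr hball)
  obtain ⟨v, hv2, hvg⟩ := hne
  refine ⟨v, ?_⟩
  rw [tendsto_atTop]
  intro K₀
  obtain ⟨K, hK⟩ := exists_nat_ge K₀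
  have hvK : v ∉ LimBad K := fun h => hvg (Set.mem_iUnion.mpr ⟨K, h⟩)
  rw [hLimBad] at hvK
  simp only [Set.mem_iInter, Set.mem_iUnion, not_forall, not_exists] at hvK
  obtain ⟨J, hJ⟩ := hvK
  refine eventually_atTop.mpr ⟨max 1 (4^J), fun T hT => ?_⟩
  have hT1 : 1 ≤ T := le_trans (le_max_left _ _) hT
  have hT4 : 4^J ≤ T := le_trans (le_max_right _ _) hT
  set j := Nat.log 4 T with hjdef
  have hj1 : 4^j ≤ T := Nat.pow_log_le_self 4 (by omega)
  have hj2 : T < 4^(j+1) := Nat.lt_pow_succ_log_self (by norm_num) T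
  have hjJ : J ≤ j := (Nat.le_log_iff_pow_le (by norm_num) (by omega)).mpr hT4
  have hnb := hJ (j - J)
  rw [Nat.add_sub_cancel' hjJ] at hnb
  have hlow : 2 * Real.sqrt ((K:ℝ)+1) * (1/2)^j < ‖Φ (4^j) v‖ := by
    by_contra hcon
    exact hnb ⟨not_lt.mp hcon, hv2⟩
  -- term bound
  have hsq : Real.sqrt ((K:ℝ)+1)^2 = (K:ℝ)+1 := Real.sq_sqrt (by positivity)
  have hxx : (4:ℝ)^j * ((1/2)^j * (1/2)^j) = 1 := by
    rw [← mul_pow, ← mul_pow]; norm_num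
  have e1 : (((4:ℝ)^j)^2) * (2*Real.sqrt ((K:ℝ)+1)*(1/2)^j)^2 = 4*((K:ℝ)+1)*4^j := by
    linear_combination (4*((K:ℝ)+1)*(4:ℝ)^j) * hxx
      + (4*((4:ℝ)^j)^2*((1/2:ℝ)^j)^2) * hsq
  have hterm : 4*((K:ℝ)+1)*4^j < ((4^j : ℕ):ℝ)^2 * ‖Φ (4^j) v‖^2 := by
    rw [← e1]
    push_cast
    apply mul_lt_mul_of_pos_left _ (by positivity)
    exact pow_lt_pow_left₀ hlow (by positivity) (by norm_num)
  have hsumge : ((4^j : ℕ):ℝ)^2 * ‖Φ (4^j) v‖^2 ≤ ∑ t ∈ Icc 1 T, (t:ℝ)^2 * ‖Φ t v‖^2 := by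
    apply Finset.single_le_sum (f := fun t : ℕ => (t:ℝ)^2 * ‖Φ t v‖^2)
      (fun t _ => by positivity)
    rw [Finset.mem_Icc]
    exact ⟨Nat.one_le_pow _ _ (by norm_num), hj1⟩
  have hTpos : (0:ℝ) < T := by exact_mod_cast Nat.lt_of_lt_of_le Nat.zero_lt_one hT1
  rw [le_div_iff₀ hTpos]
  have hTlt : (T:ℝ) < 4 * 4^j := by
    have := hj2
    have : (T:ℝ) < ((4^(j+1) : ℕ):ℝ) := by exact_mod_cast hj2
    calc (T:ℝ) < ((4^(j+1) : ℕ):ℝ) := this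
    _ = 4 * 4^j := by push_cast [pow_succ]; ring
  refine le_of_lt ?_
  calc K₀ * (T:ℝ) ≤ ((K:ℝ)+1) * T := by
        apply mul_le_mul_of_nonneg_right (by linarith) (le_of_lt hTpos)
  _ < ((K:ℝ)+1) * (4*4^j) := by
        apply mul_lt_mul_of_pos_left hTlt (by positivity)
  _ = 4*((K:ℝ)+1)*4^j := by ring
  _ < _ := lt_of_lt_of_le hterm hsumge

lemma Phi_mul {n : ℕ} (F : ℕ → (EuclideanSpace ℝ (Fin n) →L[ℝ] EuclideanSpace ℝ (Fin n))) :
    ∀ (t k : ℕ), k ≤ t → Phi F k t * Phi F 0 k = Phi F 0 t := by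
  intro t
  induction t with
  | zero =>
    intro k hk
    have : k = 0 := Nat.le_zero.mp hk
    subst this
    show Phi F 0 0 * Phi F 0 0 = Phi F 0 0
    simp [Phi]
  | succ t ih =>
    intro k hk
    rcases Nat.eq_or_lt_of_le hk with h | h
    · subst h
      have e : Phi F (t+1) (t+1) = 1 := by simp [Phi]
      rw [e, one_mul]
    · have hkt : k ≤ t := by omega
      have h1 : ¬(t+1 ≤ k) := by omega
      have e : Phi F k (t+1) = F t * Phi F k t := by simp [Phi, h1]
      have e0 : Phi F 0 (t+1) = F t * Phi F 0 t := by simp [Phi]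
      rw [e, e0, mul_assoc, ih k hkt]

lemma Phi_apply_comp {n : ℕ} (F : ℕ → (EuclideanSpace ℝ (Fin n) →L[ℝ] EuclideanSpace ℝ (Fin n)))
    {k t : ℕ} (h : k ≤ t) (y : EuclideanSpace ℝ (Fin n)) :
    Phi F k t (Phi F 0 k y) = Phi F 0 t y := by
  rw [← ContinuousLinearMap.mul_apply, Phi_mul F t k h]

lemma extract_bounds {n : ℕ} (F : ℕ → (EuclideanSpace ℝ (Fin n) →L[ℝ] EuclideanSpace ℝ (Fin n)))
    (hliminf : 0 < Filter.atTop.liminf (fun T : ℕ => (‖Phi F 0 T‖ : EReal)))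
    (hlimsup : Filter.atTop.limsup (fun T : ℕ => (‖Phi F 0 T‖ : EReal)) < ⊤) :
    ∃ (cc B : ℝ) (N : ℕ), 0 < cc ∧ ∀ t, N ≤ t → cc ≤ ‖Phi F 0 t‖ ∧ ‖Phi F 0 t‖ ≤ B := by
  obtain ⟨cr, hcr0, hcr1⟩ := EReal.exists_between_coe_real hliminf
  obtain ⟨Br, hBr1, _⟩ := EReal.exists_between_coe_real hlimsup
  have h1 : ∀ᶠ T in atTop, (cr : EReal) < (‖Phi F 0 T‖ : EReal) :=
    Filter.eventually_lt_of_lt_liminf hcr1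
  have h2 : ∀ᶠ T in atTop, (‖Phi F 0 T‖ : EReal) < (Br : EReal) :=
    Filter.eventually_lt_of_limsup_lt hBr1
  obtain ⟨N, hN⟩ := eventually_atTop.mp (h1.and h2)
  refine ⟨cr, Br, N, by exact_mod_cast hcr0, fun t ht => ?_⟩
  obtain ⟨ha, hb⟩ := hN t ht
  exact ⟨le_of_lt (by exact_mod_cast ha), le_of_lt (by exact_mod_cast hb)⟩

/-- If stage costs satisfy `c_t(x,u) ≥ M‖x‖²` with `M > 0`, each `F_t` is invertible, and
`0 < liminf_T ‖Φ(T,0)‖ ≤ limsup_T ‖Φ(T,0)‖ < ∞`, then there exist `wbar₀ ≠ 0` and `C > 0` with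
`‖C·Φ(k,0)wbar₀‖ ≤ W` for all `k`, such that the trajectory `x₀ = 0`,
`w_{k-1} = C·Φ(k,0)wbar₀`, i.e. `x_t = ∑_{k=1}^t Φ(t,k)w_{k-1} = C·t·Φ(t,0)wbar₀`, satisfies
`∑_{t=0}^T c_t(x_t,u_t) ≥ M·C²·∑_{t=1}^T t²‖Φ(t,0)wbar₀‖²` and
`liminf_{T→∞}(1/T)∑_{t=0}^T c_t(x_t,u_t) = ∞`; hence no linear-in-`T` cost bound holds. -/
theorem no_linear_bound_of_nondecaying_transition {n m : ℕ}
    (F : ℕ → (EuclideanSpace ℝ (Fin n) →L[ℝ] EuclideanSpace ℝ (Fin n)))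
    (hinv : ∀ t, IsUnit (F t))
    (c : ℕ → EuclideanSpace ℝ (Fin n) → EuclideanSpace ℝ (Fin m) → ℝ)
    (M W : ℝ) (hM : 0 < M) (hW : 0 < W)
    (hclb : ∀ t x u, M * ‖x‖ ^ 2 ≤ c t x u)
    (hliminf : 0 < Filter.atTop.liminf (fun T : ℕ => (‖Phi F 0 T‖ : EReal)))
    (hlimsup : Filter.atTop.limsup (fun T : ℕ => (‖Phi F 0 T‖ : EReal)) < ⊤) :
    ∃ (wbar₀ : EuclideanSpace ℝ (Fin n)) (C : ℝ), wbar₀ ≠ 0 ∧ 0 < C ∧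
      (∀ k : ℕ, ‖C • Phi F 0 k wbar₀‖ ≤ W) ∧
      ∀ (x : ℕ → EuclideanSpace ℝ (Fin n)),
        (∀ t, x t = ∑ k ∈ Finset.Icc 1 t, Phi F k t (C • Phi F 0 k wbar₀)) →
        ∀ u : ℕ → EuclideanSpace ℝ (Fin m),
          (∀ T : ℕ, M * C ^ 2 * ∑ t ∈ Finset.Icc 1 T, (t : ℝ) ^ 2 * ‖Phi F 0 t wbar₀‖ ^ 2 ≤
              ∑ t ∈ Finset.range (T + 1), c t (x t) (u t)) ∧
          Filter.atTop.liminf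
              (fun T : ℕ =>
                (((∑ t ∈ Finset.range (T + 1), c t (x t) (u t)) / T : ℝ) : EReal)) = ⊤ ∧
          ¬∃ C₀ Cw : ℝ, ∀ T : ℕ,
              ∑ t ∈ Finset.range (T + 1), c t (x t) (u t) ≤ C₀ + Cw * T := by
  -- n must be positive
  rcases Nat.eq_zero_or_pos n with hn0 | hn
  · exfalso
    subst hn0
    have hz : ∀ T : ℕ, Phi F 0 T = 0 := by
      intro T
      ext y i
      exact i.elim0
    have : Filter.atTop.liminf (fun T : ℕ => (‖Phi F 0 T‖ : EReal)) = ((0:ℝ) : EReal) := by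
      have : (fun T : ℕ => (‖Phi F 0 T‖ : EReal)) = fun _ => ((0:ℝ) : EReal) := by
        funext T; rw [hz T, norm_zero]
      rw [this, liminf_const]
    rw [this] at hliminf
    exact absurd hliminf (by simp)
  obtain ⟨cc, B, N, hc, hNbd⟩ := extract_bounds F hliminf hlimsup
  have hcB : cc ≤ B := le_trans (hNbd N le_rfl).1 (hNbd N le_rfl).2
  have hB0 : 0 < B := lt_of_lt_of_le hc hcB
  obtain ⟨v, htend⟩ := exists_good_vector hn (fun t => Phi F 0 t) hc hNbd
  have hv0 : v ≠ 0 := by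
    intro hv
    subst hv
    obtain ⟨T, hT⟩ := (tendsto_atTop.mp htend 1).exists
    simp only [map_zero, norm_zero] at hT
    norm_num at hT
  -- uniform bound on ‖Phi F 0 k v‖
  set D : ℝ := ∑ k ∈ Finset.range N, ‖Phi F 0 k v‖ with hD
  set R : ℝ := max (B * ‖v‖) D + 1 with hR
  have hRpos : 0 < R := by
    have : (0:ℝ) ≤ max (B * ‖v‖) D :=
      le_trans (mul_nonneg hB0.le (norm_nonneg v)) (le_max_left _ _)
    linarith
  have hRb : ∀ k : ℕ, ‖Phi F 0 k v‖ ≤ R := by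
    intro k
    rcases lt_or_ge k N with hk | hk
    · have : ‖Phi F 0 k v‖ ≤ D :=
        Finset.single_le_sum (f := fun k => ‖Phi F 0 k v‖) (fun _ _ => norm_nonneg _)
          (Finset.mem_range.mpr hk)
      calc ‖Phi F 0 k v‖ ≤ D := this
      _ ≤ max (B * ‖v‖) D := le_max_right _ _
      _ ≤ R := by linarith
    · calc ‖Phi F 0 k v‖ ≤ ‖Phi F 0 k‖ * ‖v‖ := (Phi F 0 k).le_opNorm v
      _ ≤ B * ‖v‖ := mul_le_mul_of_nonneg_right (hNbd k hk).2 (norm_nonneg v)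
      _ ≤ max (B * ‖v‖) D := le_max_left _ _
      _ ≤ R := by linarith
  set C : ℝ := W / R with hC
  have hCpos : 0 < C := div_pos hW hRpos
  refine ⟨v, C, hv0, hCpos, ?_, ?_⟩
  · intro k
    rw [norm_smul, Real.norm_eq_abs, abs_of_pos hCpos]
    calc C * ‖Phi F 0 k v‖ ≤ C * R := mul_le_mul_of_nonneg_left (hRb k) hCpos.le
    _ = W := div_mul_cancel₀ W (ne_of_gt hRpos)
  intro x hx u
  -- trajectory norm
  have hxnorm : ∀ t : ℕ, ‖x t‖ = (t:ℝ) * (C * ‖Phi F 0 t v‖) := by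
    intro t
    have hxt : x t = (t:ℝ) • (C • Phi F 0 t v) := by
      rw [hx t]
      have hcongr : ∀ k ∈ Finset.Icc 1 t, Phi F k t (C • Phi F 0 k v) = C • Phi F 0 t v := by
        intro k hk
        rw [Finset.mem_Icc] at hk
        rw [_root_.map_smul, Phi_apply_comp F hk.2]
      rw [Finset.sum_congr rfl hcongr, Finset.sum_const, Nat.card_Icc]
      simp [Nat.cast_smul_eq_nsmul]
    rw [hxt, norm_smul, norm_smul, Real.norm_natCast, Real.norm_eq_abs, abs_of_pos hCpos]
  have hsum1 : ∀ T : ℕ,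
      M * C ^ 2 * ∑ t ∈ Finset.Icc 1 T, (t : ℝ) ^ 2 * ‖Phi F 0 t v‖ ^ 2 ≤
        ∑ t ∈ Finset.range (T + 1), c t (x t) (u t) := by
    intro T
    have e1 : M * C ^ 2 * ∑ t ∈ Finset.Icc 1 T, (t : ℝ) ^ 2 * ‖Phi F 0 t v‖ ^ 2
        = ∑ t ∈ Finset.Icc 1 T, M * ‖x t‖ ^ 2 := by
      rw [Finset.mul_sum]
      apply Finset.sum_congr rfl
      intro t _
      rw [hxnorm t]
      ring
    rw [e1]
    calc ∑ t ∈ Finset.Icc 1 T, M * ‖x t‖ ^ 2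
        ≤ ∑ t ∈ Finset.Icc 1 T, c t (x t) (u t) :=
          Finset.sum_le_sum fun t _ => hclb t (x t) (u t)
    _ ≤ ∑ t ∈ Finset.range (T + 1), c t (x t) (u t) := by
          apply Finset.sum_le_sum_of_subset_of_nonneg
          · intro k hk
            rw [Finset.mem_Icc] at hk
            rw [Finset.mem_range]
            omega
          · intro t _ _
            exact le_trans (by positivity) (hclb t (x t) (u t))
  -- the averaged cost tends to infinity
  have hftend : Tendsto (fun T : ℕ => (∑ t ∈ Finset.range (T + 1), c t (x t) (u t)) / T)
      atTop atTop := by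
    have htend2 : Tendsto
        (fun T : ℕ => (M * C ^ 2) *
          ((∑ t ∈ Finset.Icc 1 T, (t : ℝ) ^ 2 * ‖Phi F 0 t v‖ ^ 2) / T)) atTop atTop :=
      htend.const_mul_atTop (by positivity)
    apply tendsto_atTop_mono' atTop _ htend2
    filter_upwards [eventually_ge_atTop 1] with T hT
    have hTpos : (0:ℝ) < T := by exact_mod_cast hT
    rw [mul_div_assoc']
    gcongr
    exact hsum1 T
  refine ⟨hsum1, ?_, ?_⟩
  · have : Tendsto
        (fun T : ℕ => (((∑ t ∈ Finset.range (T + 1), c t (x t) (u t)) / T : ℝ) : EReal))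
        atTop (nhds ⊤) := by
      rw [EReal.tendsto_nhds_top_iff_real]
      intro r
      filter_upwards [hftend.eventually_gt_atTop r] with T hT
      exact_mod_cast hT
    exact this.liminf_eq
  · rintro ⟨C₀, Cw, hbd⟩
    obtain ⟨T, hT⟩ := ((hftend.eventually_ge_atTop (|C₀| + |Cw| + 1)).and
      (eventually_ge_atTop 1)).exists
    obtain ⟨hTf, hT1⟩ := hT
    have hTpos : (0:ℝ) < T := by exact_mod_cast hT1
    have hTr : (1:ℝ) ≤ T := by exact_mod_cast hT1
    have hge : (|C₀| + |Cw| + 1) * T ≤ ∑ t ∈ Finset.range (T + 1), c t (x t) (u t) := by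
      rw [← le_div_iff₀ hTpos]
      exact hTf
    have hle := hbd T
    nlinarith [le_abs_self C₀, le_abs_self Cw, abs_nonneg C₀, abs_nonneg Cw,
      mul_le_mul_of_nonneg_right (le_abs_self Cw) hTpos.le,
      mul_le_mul_of_nonneg_left hTr (abs_nonneg C₀)]
end
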